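/- Let Γ be a Coxeter graph of small type, let A be a closed subset of Φ^+, and let E = {w∈W : Φ_w ⊆ A}. Then: (i) E is finite; (ii) if u<v and v∈E then u∈E; and (iii) if v∈W and s,t∈S satisfy l(vs)=l(vt)=l(v)+1 and vs,vt∈E, then v·prod(s,t;m_{s,t})∈E. -/

import Mathlib

noncomputable section

namespace ArtinInj

/-- `altProd a b m` is the alternating product `prod(a,b;m) = abab⋯` with `m` factors. -/
def altProd {G : Type*} [Monoid G] (a b : G) : ℕ → G
  | 0 => 1
  | n + 1 => a * altProd b a n

variable {S : Type} [DecidableEq S] [Fintype S]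

/-- The braid relations on the free monoid over `S`.  Here `M s t = 0` encodes
`m_{s,t} = ∞`. -/
def braidRel (M : CoxeterMatrix S) (u v : FreeMonoid S) : Prop :=
  ∃ s t : S, s ≠ t ∧ M s t ≠ 0 ∧
    u = altProd (FreeMonoid.of s) (FreeMonoid.of t) (M s t) ∧
    v = altProd (FreeMonoid.of t) (FreeMonoid.of s) (M s t)

/-- The Artin monoid `G_Γ⁺` of a Coxeter matrix. -/
abbrev ArtinMonoid (M : CoxeterMatrix S) : Type := PresentedMonoid (braidRel M)

/-- The generators `σ_s` of the Artin monoid. -/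
def sigma (M : CoxeterMatrix S) (s : S) : ArtinMonoid M := PresentedMonoid.of (braidRel M) s

/-- The braid relators in the free group over `S`. -/
def artinRels (M : CoxeterMatrix S) : Set (FreeGroup S) :=
  {r | ∃ s t : S, s ≠ t ∧ M s t ≠ 0 ∧
    r = altProd (FreeGroup.of s) (FreeGroup.of t) (M s t) *
        (altProd (FreeGroup.of t) (FreeGroup.of s) (M s t))⁻¹}

/-- The Artin group `G_Γ` of a Coxeter matrix. -/
abbrev ArtinGroup (M : CoxeterMatrix S) : Type := PresentedGroup (artinRels M)

/-- The generators `σ_s` of the Artin group. -/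
def agen (M : CoxeterMatrix S) (s : S) : ArtinGroup M := PresentedGroup.of s

/-- The partial order on the Artin monoid: `g < h ⟺ ∃ f, g f = h`. -/
def mle {M : CoxeterMatrix S} (g h : ArtinMonoid M) : Prop := ∃ f, g * f = h

/-- A Coxeter matrix is of small type when all off-diagonal entries are 2 or 3. -/
def SmallType (M : CoxeterMatrix S) : Prop := ∀ s t : S, s ≠ t → M s t = 2 ∨ M s t = 3

/-- `m ≥ 3` in `{2,3,...,∞}`, where `∞` is encoded by `0`. -/
def BigEntry (m : ℕ) : Prop := m = 0 ∨ 3 ≤ m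

/-- A Coxeter matrix has no triangle when there are no three distinct vertices with
pairwise entries `≥ 3`. -/
def NoTriangle (M : CoxeterMatrix S) : Prop :=
  ¬ ∃ s t r : S, s ≠ t ∧ s ≠ r ∧ t ≠ r ∧
      BigEntry (M s t) ∧ BigEntry (M s r) ∧ BigEntry (M t r)

variable {W : Type} [Group W]

/-- The partial order `u < v` on the Coxeter group: `l(v) = l(u) + l(u⁻¹ v)`. -/
def wle {M : CoxeterMatrix S} (cs : CoxeterSystem M W) (u v : W) : Prop :=
  cs.length v = cs.length u + cs.length (u⁻¹ * v)

/-- The simple root `α_s`. -/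
def sroot (s : S) : S → ℝ := Pi.single s 1

/-- The entries `⟨α_s, α_t⟩ = -2 cos (π / m_{s,t})` of the canonical bilinear form
(equal to `-2` when `m_{s,t} = ∞`, encoded by `M s t = 0`). -/
def formEnt (M : CoxeterMatrix S) (s t : S) : ℝ :=
  if M s t = 0 then -2 else -2 * Real.cos (Real.pi / (M s t : ℝ))

/-- The canonical symmetric bilinear form `⟨·,·⟩` on `U = ℝ^S`. -/
def form (M : CoxeterMatrix S) (x v : S → ℝ) : ℝ :=
  ∑ s : S, ∑ t : S, x s * v t * formEnt M s t

/-- `ρ` is the canonical (geometric) representation of the Coxeter system. -/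
def IsGeomRep (M : CoxeterMatrix S) (cs : CoxeterSystem M W)
    (ρ : W →* ((S → ℝ) →ₗ[ℝ] (S → ℝ))) : Prop :=
  ∀ (s : S) (x : S → ℝ), ρ (cs.simple s) x = x - form M (sroot s) x • sroot s

/-- The root system `Φ = {w α_s}`. -/
def Phi (ρ : W →* ((S → ℝ) →ₗ[ℝ] (S → ℝ))) : Set (S → ℝ) :=
  {u | ∃ (w : W) (s : S), u = ρ w (sroot s)}

/-- The positive roots `Φ⁺`. -/
def PhiPlus (ρ : W →* ((S → ℝ) →ₗ[ℝ] (S → ℝ))) : Set (S → ℝ) :=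
  {u | u ∈ Phi ρ ∧ ∀ s : S, 0 ≤ u s}

/-- The negative roots `Φ⁻ = -Φ⁺`. -/
def PhiMinus (ρ : W →* ((S → ℝ) →ₗ[ℝ] (S → ℝ))) : Set (S → ℝ) :=
  {u | -u ∈ PhiPlus ρ}

/-- The inversion set `Φ_w = {β ∈ Φ⁺ : w⁻¹ β ∈ Φ⁻}`. -/
def invSet (ρ : W →* ((S → ℝ) →ₗ[ℝ] (S → ℝ))) (w : W) : Set (S → ℝ) :=
  {u | u ∈ PhiPlus ρ ∧ ρ w⁻¹ u ∈ PhiMinus ρ}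

/-- The depth `dp(β) = min { l(w) : w β ∈ Φ⁻ }` of a positive root. -/
def dp {M : CoxeterMatrix S} (cs : CoxeterSystem M W)
    (ρ : W →* ((S → ℝ) →ₗ[ℝ] (S → ℝ))) (u : S → ℝ) : ℕ :=
  sInf {l : ℕ | ∃ w : W, ρ w u ∈ PhiMinus ρ ∧ cs.length w = l}

/-- Closed subsets of `Φ⁺`. -/
def ClosedSub (M : CoxeterMatrix S) (ρ : W →* ((S → ℝ) →ₗ[ℝ] (S → ℝ)))
    (A : Set (S → ℝ)) : Prop :=
  A ⊆ PhiPlus ρ ∧ A.Finite ∧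
    (∀ a ∈ A, ∀ b ∈ A, -1 ≤ form M a b) ∧
    (∀ a ∈ A, ∀ b ∈ A, form M a b = -1 → a + b ∈ A)

/-- The field `K = ℚ(x,y)` of rational functions in two variables over `ℚ`. -/
abbrev KK : Type := FractionRing (MvPolynomial (Fin 2) ℚ)

/-- The variable `x` of `K`. -/
def Xv : KK := algebraMap (MvPolynomial (Fin 2) ℚ) KK (MvPolynomial.X 0)

/-- The variable `y` of `K`. -/
def Yv : KK := algebraMap (MvPolynomial (Fin 2) ℚ) KK (MvPolynomial.X 1)

/-- The image in `K` of a polynomial of `ℚ[y]`. -/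
def Ty (p : Polynomial ℚ) : KK := Polynomial.eval₂ (Rat.castHom KK) Yv p

/-- The `K`-vector space `V` with basis `{e_β : β ∈ Φ⁺}`. -/
abbrev VV (ρ : W →* ((S → ℝ) →ₗ[ℝ] (S → ℝ))) : Type := ↥(PhiPlus ρ) →₀ KK

/-- The basis vectors `e_β` of `V` (defined to be `0` for `β ∉ Φ⁺`). -/
def ebase (ρ : W →* ((S → ℝ) →ₗ[ℝ] (S → ℝ))) (u : S → ℝ) : VV ρ := by
  haveI := Classical.dec (u ∈ PhiPlus ρ)
  exact if h : u ∈ PhiPlus ρ then Finsupp.single (⟨u, h⟩ : ↥(PhiPlus ρ)) (1 : KK) else 0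

/-- `φ : S → End(V)` is the family of linear maps `φ_s` of Section 3 of the paper. -/
def PhiMapSpec (M : CoxeterMatrix S) (ρ : W →* ((S → ℝ) →ₗ[ℝ] (S → ℝ)))
    (φ : S → Module.End KK (VV ρ)) : Prop :=
  ∀ s : S, ∀ u ∈ PhiPlus ρ,
    (u = sroot s → φ s (ebase ρ u) = 0) ∧
    (form M (sroot s) u = 0 → φ s (ebase ρ u) = ebase ρ u) ∧
    (0 < form M (sroot s) u → u ≠ sroot s →
      φ s (ebase ρ u) = Yv • ebase ρ (u - form M (sroot s) u • sroot s)) ∧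
    (form M (sroot s) u < 0 →
      φ s (ebase ρ u) = (1 - Yv) • ebase ρ u + ebase ρ (u - form M (sroot s) u • sroot s))

/-- `T : S × Φ⁺ → ℚ[y]` is the family of polynomials `T(s,β)` defined by (D1)–(D9),
by induction on the depth of `β`; the recursion may be applied with any `t ∈ S`
such that `dp(t β) = dp(β) - 1`. -/
def TSpec (M : CoxeterMatrix S) (cs : CoxeterSystem M W)
    (ρ : W →* ((S → ℝ) →ₗ[ℝ] (S → ℝ))) (T : S → (S → ℝ) → Polynomial ℚ) : Prop :=
  (∀ s : S, T s (sroot s) = Polynomial.X ^ 2) ∧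
  (∀ s t : S, t ≠ s → T s (sroot t) = 0) ∧
  (∀ s t : S, ∀ u ∈ PhiPlus ρ, 2 ≤ dp cs ρ u →
    0 < form M (sroot t) u → dp cs ρ (ρ (cs.simple t) u) = dp cs ρ u - 1 →
    (0 < form M (sroot s) u →
      T s u = Polynomial.X ^ (dp cs ρ u) * (Polynomial.X - 1)) ∧
    (form M (sroot s) u = 0 → form M (sroot s) (sroot t) = 0 →
      T s u = Polynomial.X * T s (u - form M (sroot t) u • sroot t)) ∧
    (form M (sroot s) u = 0 → form M (sroot s) (sroot t) = -1 →
      T s u = (Polynomial.X - 1) * T s (u - form M (sroot t) u • sroot t) +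
        Polynomial.X * T t (u - form M (sroot t) u • sroot s - form M (sroot t) u • sroot t)) ∧
    (form M (sroot s) u < 0 → form M (sroot s) (sroot t) = 0 →
      T s u = Polynomial.X * T s (u - form M (sroot t) u • sroot t)) ∧
    (form M (sroot s) u < 0 → form M (sroot s) (sroot t) = -1 →
      -(form M (sroot s) u) < form M (sroot t) u →
      T s u = (Polynomial.X - 1) * T s (u - form M (sroot t) u • sroot t) +
        Polynomial.X * T t (u - (form M (sroot t) u + form M (sroot s) u) • sroot s
          - form M (sroot t) u • sroot t)) ∧
    (form M (sroot s) u < 0 → form M (sroot s) (sroot t) = -1 →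
      -(form M (sroot s) u) = form M (sroot t) u →
      T s u = T t (u - form M (sroot t) u • sroot t) +
        (Polynomial.X - 1) * T s (u - form M (sroot t) u • sroot t)) ∧
    (form M (sroot s) u < 0 → form M (sroot s) (sroot t) = -1 →
      form M (sroot t) u < -(form M (sroot s) u) →
      T s u = Polynomial.X * T s (u - form M (sroot t) u • sroot t) +
        T t (u - form M (sroot t) u • sroot t) +
        Polynomial.X ^ (dp cs ρ u - 1) * (1 - Polynomial.X)))

/-- `ψ : S → End(V)` is the family of linear maps `ψ_s(e_β) = φ_s(e_β) + x T(s,β) e_{α_s}`. -/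
def PsiSpec (M : CoxeterMatrix S) (ρ : W →* ((S → ℝ) →ₗ[ℝ] (S → ℝ)))
    (T : S → (S → ℝ) → Polynomial ℚ) (ψ : S → Module.End KK (VV ρ)) : Prop :=
  ∀ s : S, ∀ u ∈ PhiPlus ρ,
    (u = sroot s → ψ s (ebase ρ u) = (Xv * Ty (T s u)) • ebase ρ (sroot s)) ∧
    (form M (sroot s) u = 0 →
      ψ s (ebase ρ u) = ebase ρ u + (Xv * Ty (T s u)) • ebase ρ (sroot s)) ∧
    (0 < form M (sroot s) u → u ≠ sroot s →
      ψ s (ebase ρ u) = Yv • ebase ρ (u - form M (sroot s) u • sroot s) +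
        (Xv * Ty (T s u)) • ebase ρ (sroot s)) ∧
    (form M (sroot s) u < 0 →
      ψ s (ebase ρ u) = (1 - Yv) • ebase ρ u +
        ebase ρ (u - form M (sroot s) u • sroot s) +
        (Xv * Ty (T s u)) • ebase ρ (sroot s))

/-- The set `σ_s ∗ A` (Lemma 4.4 of the paper). -/
def starSet (M : CoxeterMatrix S) (ρ : W →* ((S → ℝ) →ₗ[ℝ] (S → ℝ)))
    (s : S) (A : Set (S → ℝ)) : Set (S → ℝ) :=
  {sroot s} ∪
  {u | u ∈ PhiPlus ρ ∧ form M (sroot s) u = 0 ∧ u ∈ A} ∪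
  {u | u ∈ PhiPlus ρ ∧ 0 < form M (sroot s) u ∧ u ≠ sroot s ∧
        u - form M (sroot s) u • sroot s ∈ A} ∪
  {u | u ∈ PhiPlus ρ ∧ form M (sroot s) u < 0 ∧ u ∈ A ∧
        u - form M (sroot s) u • sroot s ∈ A}

section Lemmas

variable {S : Type} [DecidableEq S] [Fintype S] {W : Type} [Group W]
variable {M : CoxeterMatrix S} {cs : CoxeterSystem M W}
variable {rho : W →* ((S → ℝ) →ₗ[ℝ] (S → ℝ))}

lemma formEnt_comm (M : CoxeterMatrix S) (s t : S) : formEnt M s t = formEnt M t s := by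
  unfold formEnt; rw [M.symmetric s t]

lemma formEnt_self (M : CoxeterMatrix S) (s : S) : formEnt M s s = 2 := by
  unfold formEnt
  rw [M.diagonal s]
  norm_num [Real.cos_pi]

lemma formEnt_two {s t : S} (h : M s t = 2) : formEnt M s t = 0 := by
  unfold formEnt
  rw [h]
  norm_num [Real.cos_pi_div_two]

lemma formEnt_three {s t : S} (h : M s t = 3) : formEnt M s t = -1 := by
  unfold formEnt
  rw [h]
  norm_num [Real.cos_pi_div_three]

lemma form_add_right (x v w : S → ℝ) : form M x (v + w) = form M x v + form M x w := by
  unfold form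
  rw [← Finset.sum_add_distrib]
  refine Finset.sum_congr rfl fun s _ => ?_
  rw [← Finset.sum_add_distrib]
  refine Finset.sum_congr rfl fun t _ => ?_
  simp only [Pi.add_apply]; ring

lemma form_sub_right (x v w : S → ℝ) : form M x (v - w) = form M x v - form M x w := by
  unfold form
  rw [← Finset.sum_sub_distrib]
  refine Finset.sum_congr rfl fun s _ => ?_
  rw [← Finset.sum_sub_distrib]
  refine Finset.sum_congr rfl fun t _ => ?_
  simp only [Pi.sub_apply]; ring

lemma form_smul_right (c : ℝ) (x v : S → ℝ) : form M x (c • v) = c * form M x v := by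
  unfold form
  rw [Finset.mul_sum]
  refine Finset.sum_congr rfl fun s _ => ?_
  rw [Finset.mul_sum]
  refine Finset.sum_congr rfl fun t _ => ?_
  simp only [Pi.smul_apply, smul_eq_mul]; ring

lemma form_comm (x v : S → ℝ) : form M x v = form M v x := by
  unfold form
  rw [Finset.sum_comm]
  refine Finset.sum_congr rfl fun s _ => ?_
  refine Finset.sum_congr rfl fun t _ => ?_
  rw [formEnt_comm]; ring

lemma form_sub_left (x v w : S → ℝ) : form M (v - w) x = form M v x - form M w x := by
  rw [form_comm, form_sub_right, form_comm x v, form_comm x w]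

lemma form_smul_left (c : ℝ) (x v : S → ℝ) : form M (c • v) x = c * form M v x := by
  rw [form_comm, form_smul_right, form_comm x v]

lemma form_sroot_sroot (M : CoxeterMatrix S) (s t : S) :
    form M (sroot s) (sroot t) = formEnt M s t := by
  unfold form sroot
  rw [Finset.sum_comm]
  simp [Pi.single_apply, ite_mul, mul_ite]

end Lemmas
section Lemmas2
set_option linter.unusedSectionVars false

variable {S : Type} [DecidableEq S] [Fintype S] {W : Type} [Group W]
variable {M : CoxeterMatrix S} {cs : CoxeterSystem M W}
variable {rho : W →* ((S → ℝ) →ₗ[ℝ] (S → ℝ))}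

lemma rho_mul (a b : W) (x : S → ℝ) : rho (a * b) x = rho a (rho b x) := by
  rw [map_mul]; rfl

lemma rho_one (x : S → ℝ) : rho 1 x = x := by rw [map_one]; rfl

lemma rho_inv_apply (w : W) (x : S → ℝ) : rho w⁻¹ (rho w x) = x := by
  rw [← rho_mul, inv_mul_cancel, rho_one]

lemma form_rho_simple (hrho : IsGeomRep M cs rho) (i : S) (x y : S → ℝ) :
    form M (rho (cs.simple i) x) (rho (cs.simple i) y) = form M x y := by
  rw [hrho, hrho]
  rw [form_sub_right, form_sub_left, form_sub_left, form_smul_right, form_smul_left,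
    form_smul_left, form_smul_right, form_sroot_sroot, formEnt_self]
  rw [form_comm (sroot i) x]
  ring

lemma form_rho (hrho : IsGeomRep M cs rho) (w : W) (x y : S → ℝ) :
    form M (rho w x) (rho w y) = form M x y := by
  have : ∀ x y : S → ℝ, form M (rho w x) (rho w y) = form M x y := by
    induction w using cs.simple_induction with
    | simple i => exact form_rho_simple hrho i
    | one => intro x y; rw [rho_one, rho_one]
    | mul w₁ w₂ h₁ h₂ => intro x y; rw [rho_mul, rho_mul, h₁, h₂]
  exact this x y

lemma sroot_nonneg (i j : S) : 0 ≤ sroot i j := by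
  unfold sroot
  rw [Pi.single_apply]
  split <;> norm_num

lemma sroot_mem_Phi (i : S) : sroot i ∈ Phi rho := ⟨1, i, (rho_one _).symm⟩

lemma sroot_mem_PhiPlus (i : S) : sroot i ∈ PhiPlus rho :=
  ⟨sroot_mem_Phi i, sroot_nonneg i⟩

lemma rho_mem_Phi {u : S → ℝ} (w : W) (hu : u ∈ Phi rho) : rho w u ∈ Phi rho := by
  obtain ⟨w', s, rfl⟩ := hu
  exact ⟨w * w', s, (rho_mul _ _ _).symm⟩

lemma root_ne_zero {u : S → ℝ} (hu : u ∈ Phi rho) : u ≠ 0 := by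
  obtain ⟨w, s, rfl⟩ := hu
  intro h
  have h2 : rho w⁻¹ (rho w (sroot s)) = rho w⁻¹ 0 := by rw [h]
  rw [rho_inv_apply, map_zero] at h2
  have := congrFun h2 s
  simp [sroot, Pi.single_apply] at this

lemma root_form_self (hrho : IsGeomRep M cs rho) {u : S → ℝ} (hu : u ∈ Phi rho) :
    form M u u = 2 := by
  obtain ⟨w, s, rfl⟩ := hu
  rw [form_rho hrho, form_sroot_sroot, formEnt_self]

lemma rho_simple_self (hrho : IsGeomRep M cs rho) (i : S) :
    rho (cs.simple i) (sroot i) = -sroot i := by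
  rw [hrho, form_sroot_sroot, formEnt_self, two_smul]
  abel

lemma neg_root {u : S → ℝ} (hrho : IsGeomRep M cs rho) (hu : u ∈ Phi rho) : -u ∈ Phi rho := by
  obtain ⟨w, s, rfl⟩ := hu
  refine ⟨w * cs.simple s, s, ?_⟩
  rw [rho_mul, rho_simple_self hrho, map_neg]

end Lemmas2
section Lemmas3
set_option linter.unusedSectionVars false

variable {S : Type} [DecidableEq S] [Fintype S] {W : Type} [Group W]
variable {M : CoxeterMatrix S} {cs : CoxeterSystem M W}
variable {rho : W →* ((S → ℝ) →ₗ[ℝ] (S → ℝ))}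

lemma rho_simple_sroot (hrho : IsGeomRep M cs rho) (i j : S) :
    rho (cs.simple i) (sroot j) = sroot j - formEnt M i j • sroot i := by
  rw [hrho, form_sroot_sroot]

/-- Key lemma: if `l(w s_i) > l(w)` then `w α_i` is nonnegative. -/
lemma kl (hsmall : SmallType M) (hrho : IsGeomRep M cs rho) :
    ∀ (n : ℕ) (w : W) (i : S), cs.length w ≤ n →
      cs.length w < cs.length (w * cs.simple i) → ∀ j, 0 ≤ rho w (sroot i) j := by
  intro n
  induction n with
  | zero =>
    intro w i hw _ j
    have hw1 : w = 1 := cs.length_eq_zero_iff.mp (Nat.le_zero.mp hw)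
    rw [hw1, rho_one]
    exact sroot_nonneg i j
  | succ n IH =>
    intro w i hw hi j
    by_cases hw1 : w = 1
    · rw [hw1, rho_one]; exact sroot_nonneg i j
    obtain ⟨t, ht⟩ := cs.exists_rightDescent_of_ne_one hw1
    have htlt : cs.length (w * cs.simple t) < cs.length w := ht
    set w' := w * cs.simple t with hw'def
    have hw'w : w = w' * cs.simple t := by
      rw [hw'def, cs.simple_mul_simple_cancel_right]
    have hlw' : cs.length w' + 1 = cs.length w := by
      have h := cs.length_mul_simple w t
      rw [← hw'def] at h
      omega
    have hti : t ≠ i := by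
      intro h
      rw [hw'def, h] at htlt
      omega
    have hle' : cs.length w' ≤ n := by omega
    have hnd' : cs.length w' < cs.length (w' * cs.simple t) := by
      rw [← hw'w]; omega
    rcases hsmall t i hti with hM2 | hM3
    · -- commuting case
      have hval : rho w (sroot i) = rho w' (sroot i) := by
        rw [hw'w, rho_mul, rho_simple_sroot hrho, formEnt_two hM2, zero_smul, sub_zero]
      by_cases hdi : cs.length w' < cs.length (w' * cs.simple i)
      · rw [hval]; exact IH w' i hle' hdi j
      · exfalso
        have hdi' : cs.length (w' * cs.simple i) + 1 = cs.length w' := by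
          rcases cs.length_mul_simple w' i with h | h
          · omega
          · omega
        have hcomm : cs.simple t * cs.simple i = cs.simple i * cs.simple t := by
          have h2 := cs.simple_mul_simple_pow t i
          rw [hM2] at h2
          have h3 : (cs.simple t * cs.simple i) * (cs.simple t * cs.simple i) = 1 := by
            rw [← sq]; exact h2
          have h4 : cs.simple t * cs.simple i = (cs.simple t * cs.simple i)⁻¹ :=
            eq_inv_of_mul_eq_one_left h3
          rw [h4, mul_inv_rev, cs.inv_simple, cs.inv_simple]
        have : w * cs.simple i = (w' * cs.simple i) * cs.simple t := by
          calc w * cs.simple i = w' * cs.simple t * cs.simple i := by rw [← hw'w]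
            _ = w' * (cs.simple t * cs.simple i) := by rw [mul_assoc]
            _ = w' * (cs.simple i * cs.simple t) := by rw [hcomm]
            _ = (w' * cs.simple i) * cs.simple t := by rw [← mul_assoc]
        have hlen : cs.length (w * cs.simple i) ≤ cs.length (w' * cs.simple i) + 1 := by
          rw [this]
          calc cs.length (w' * cs.simple i * cs.simple t)
              ≤ cs.length (w' * cs.simple i) + cs.length (cs.simple t) := cs.length_mul_le _ _
            _ = cs.length (w' * cs.simple i) + 1 := by rw [cs.length_simple]
        omega
    · -- braid case, M t i = 3
      have hMit : M i t = 3 := by rw [M.symmetric]; exact hM3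
      have hval : rho w (sroot i) = rho w' (sroot i) + rho w' (sroot t) := by
        rw [hw'w, rho_mul, rho_simple_sroot hrho, formEnt_three hM3, neg_smul, one_smul,
          sub_neg_eq_add, map_add]
      have hpt : ∀ j, 0 ≤ rho w' (sroot t) j := IH w' t hle' hnd'
      by_cases hdi : cs.length w' < cs.length (w' * cs.simple i)
      · have hpi := IH w' i hle' hdi
        rw [hval]
        exact add_nonneg (hpi j) (hpt j)
      · have hdi' : cs.length (w' * cs.simple i) + 1 = cs.length w' := by
          rcases cs.length_mul_simple w' i with h | h
          · omega
          · omega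
        set w'' := w' * cs.simple i with hw''def
        have hw''w : w' = w'' * cs.simple i := by
          rw [hw''def, cs.simple_mul_simple_cancel_right]
        have hval2 : rho w (sroot i) = rho w'' (sroot t) := by
          have hsum : rho (cs.simple i) (sroot i + sroot t) = sroot t := by
            rw [hrho, form_add_right, form_sroot_sroot, form_sroot_sroot, formEnt_self,
              formEnt_three hMit]
            have h21 : (2:ℝ) + -1 = 1 := by norm_num
            rw [h21, one_smul]
            abel
          rw [hval, ← map_add, hw''w, rho_mul, hsum]
        by_cases hdt : cs.length w'' < cs.length (w'' * cs.simple t)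
        · have hle'' : cs.length w'' ≤ n := by omega
          rw [hval2]
          exact IH w'' t hle'' hdt j
        · exfalso
          have hdt' : cs.length (w'' * cs.simple t) + 1 = cs.length w'' := by
            rcases cs.length_mul_simple w'' t with h | h
            · omega
            · omega
          set w3 := w'' * cs.simple t with hw3def
          have hw3w : w'' = w3 * cs.simple t := by
            rw [hw3def, cs.simple_mul_simple_cancel_right]
          have hbraid : cs.simple t * cs.simple i * cs.simple t
              = cs.simple i * cs.simple t * cs.simple i := by
            have h3 := cs.simple_mul_simple_pow t i
            rw [hM3] at h3
            have h4 : (cs.simple t * cs.simple i) * (cs.simple t * cs.simple i)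
                * (cs.simple t * cs.simple i) = 1 := by
              have h4x := h3
              rw [pow_succ, pow_succ, pow_one] at h4x
              exact h4x
            -- from (ti)^3 = 1 and involutions: tit = iti
            have h5 : cs.simple t * cs.simple i * cs.simple t
                = (cs.simple i * cs.simple t * cs.simple i)⁻¹ := by
              rw [eq_inv_iff_mul_eq_one]
              calc cs.simple t * cs.simple i * cs.simple t
                    * (cs.simple i * cs.simple t * cs.simple i)
                  = (cs.simple t * cs.simple i) * (cs.simple t * cs.simple i)
                    * (cs.simple t * cs.simple i) := by group
                _ = 1 := h4
            rw [h5]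
            simp [mul_inv_rev, cs.inv_simple, mul_assoc]
          have hwexp : w = w3 * cs.simple t * cs.simple i * cs.simple t := by
            rw [hw'w, hw''w, hw3w]
          have hwi : w * cs.simple i = (w3 * cs.simple i) * cs.simple t := by
            calc w * cs.simple i
                = w3 * (cs.simple t * cs.simple i * cs.simple t) * cs.simple i := by
                  rw [hwexp]; group
              _ = w3 * (cs.simple i * cs.simple t * cs.simple i) * cs.simple i := by
                  rw [hbraid]
              _ = w3 * (cs.simple i * (cs.simple t * (cs.simple i * cs.simple i))) := by
                  group
              _ = (w3 * cs.simple i) * cs.simple t := by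
                  rw [cs.simple_mul_simple_self, mul_one]
                  group
          have hlen : cs.length (w * cs.simple i)
              ≤ cs.length w3 + 2 := by
            rw [hwi]
            calc cs.length (w3 * cs.simple i * cs.simple t)
                ≤ cs.length (w3 * cs.simple i) + cs.length (cs.simple t) := cs.length_mul_le _ _
              _ ≤ (cs.length w3 + cs.length (cs.simple i)) + cs.length (cs.simple t) := by
                  have := cs.length_mul_le w3 (cs.simple i)
                  omega
              _ = cs.length w3 + 2 := by rw [cs.length_simple, cs.length_simple]
          omega

/-- Converse direction: if `l(w s_i) < l(w)` then `w α_i` is nonpositive. -/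
lemma klneg (hsmall : SmallType M) (hrho : IsGeomRep M cs rho) (w : W) (i : S)
    (h : cs.length (w * cs.simple i) < cs.length w) : ∀ j, rho w (sroot i) j ≤ 0 := by
  intro j
  have hw : w = (w * cs.simple i) * cs.simple i := by
    rw [cs.simple_mul_simple_cancel_right]
  have h2 : cs.length (w * cs.simple i) < cs.length ((w * cs.simple i) * cs.simple i) := by
    rw [← hw]; exact h
  have h3 := kl hsmall hrho (cs.length (w * cs.simple i)) (w * cs.simple i) i le_rfl h2 j
  have h4 : rho w (sroot i) = -(rho (w * cs.simple i) (sroot i)) := by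
    conv_lhs => rw [hw]
    rw [rho_mul, rho_simple_self hrho, map_neg]
  rw [h4]
  simp only [Pi.neg_apply]
  linarith

end Lemmas3
section Lemmas4
set_option linter.unusedSectionVars false

variable {S : Type} [DecidableEq S] [Fintype S] {W : Type} [Group W]
variable {M : CoxeterMatrix S} {cs : CoxeterSystem M W}
variable {rho : W →* ((S → ℝ) →ₗ[ℝ] (S → ℝ))}

/-- Every root is positive or negative. -/
lemma root_dichotomy (hsmall : SmallType M) (hrho : IsGeomRep M cs rho) {u : S → ℝ}
    (hu : u ∈ Phi rho) : u ∈ PhiPlus rho ∨ u ∈ PhiMinus rho := by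
  obtain ⟨w, s, rfl⟩ := hu
  rcases cs.length_mul_simple w s with h | h
  · left
    refine ⟨⟨w, s, rfl⟩, ?_⟩
    exact kl hsmall hrho (cs.length w) w s le_rfl (by omega)
  · right
    show -(rho w (sroot s)) ∈ PhiPlus rho
    refine ⟨neg_root hrho ⟨w, s, rfl⟩, fun j => ?_⟩
    have := klneg hsmall hrho w s (by omega) j
    simp only [Pi.neg_apply]
    linarith

lemma not_mem_PhiMinus {u : S → ℝ} (hu : u ∈ PhiPlus rho) : u ∉ PhiMinus rho := by
  intro hm
  have h0 : u = 0 := by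
    funext j
    have h1 := hu.2 j
    have h2 := hm.2 j
    simp only [Pi.neg_apply] at h2
    show u j = 0
    linarith
  exact root_ne_zero hu.1 h0

/-- A simple reflection permutes the positive roots other than its own. -/
lemma simple_perm (hsmall : SmallType M) (hrho : IsGeomRep M cs rho) {u : S → ℝ} (i : S)
    (hu : u ∈ PhiPlus rho) (hne : u ≠ sroot i) : rho (cs.simple i) u ∈ PhiPlus rho := by
  have hmem : rho (cs.simple i) u ∈ Phi rho := rho_mem_Phi _ hu.1
  rcases root_dichotomy hsmall hrho hmem with h | h
  · exact h
  exfalso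
  -- then u is supported on {i}
  have hcoord : ∀ j, j ≠ i → u j = 0 := by
    intro j hj
    have h2 := h.2 j
    have h3 : rho (cs.simple i) u = u - form M (sroot i) u • sroot i := hrho i u
    rw [h3] at h2
    simp only [Pi.neg_apply, Pi.sub_apply, Pi.smul_apply, smul_eq_mul] at h2
    have h4 : sroot i j = 0 := by simp [sroot, Pi.single_apply, hj]
    rw [h4, mul_zero] at h2
    have := hu.2 j
    linarith
  have humulti : u = u i • sroot i := by
    funext j
    by_cases hj : j = i
    · subst hj; simp [sroot, Pi.single_apply]
    · rw [hcoord j hj]; simp [sroot, Pi.single_apply, hj]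
  have hform : form M u u = 2 := root_form_self hrho hu.1
  rw [humulti, form_smul_left, form_smul_right, form_sroot_sroot, formEnt_self] at hform
  have hui : u i = 1 := by
    have hnn : 0 ≤ u i := hu.2 i
    nlinarith
  rw [hui, one_smul] at humulti
  exact hne humulti

lemma mem_PhiMinus_iff {u : S → ℝ} : u ∈ PhiMinus rho ↔ -u ∈ PhiPlus rho := Iff.rfl

/-- `w α_i` is a positive root when `l(w s_i) > l(w)`. -/
lemma rho_sroot_mem_PhiPlus (hsmall : SmallType M) (hrho : IsGeomRep M cs rho) {w : W} {i : S}
    (h : cs.length w < cs.length (w * cs.simple i)) : rho w (sroot i) ∈ PhiPlus rho :=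
  ⟨⟨w, i, rfl⟩, kl hsmall hrho (cs.length w) w i le_rfl h⟩

/-- The recursion for inversion sets. -/
lemma invSet_mul_simple (hsmall : SmallType M) (hrho : IsGeomRep M cs rho) {w : W} {i : S}
    (h : cs.length w < cs.length (w * cs.simple i)) :
    invSet rho (w * cs.simple i) = insert (rho w (sroot i)) (invSet rho w) := by
  have hβ : rho w (sroot i) ∈ PhiPlus rho := rho_sroot_mem_PhiPlus hsmall hrho h
  ext u
  constructor
  · rintro ⟨hu1, hu2⟩
    have hz : rho (w * cs.simple i)⁻¹ u = rho (cs.simple i) (rho w⁻¹ u) := by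
      rw [mul_inv_rev, cs.inv_simple, rho_mul]
    rw [hz] at hu2
    have hzPhi : rho w⁻¹ u ∈ Phi rho := rho_mem_Phi _ hu1.1
    rcases root_dichotomy hsmall hrho hzPhi with hp | hm
    · -- positive: must be the simple root
      by_cases hne : rho w⁻¹ u = sroot i
      · left
        have : rho w (rho w⁻¹ u) = u := by rw [← rho_mul, mul_inv_cancel, rho_one]
        rw [← this, hne]
      · exfalso
        exact not_mem_PhiMinus (simple_perm hsmall hrho i hp hne) hu2
    · right
      exact ⟨hu1, hm⟩
  · intro hu
    rcases hu with rfl | hu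
    · refine ⟨hβ, ?_⟩
      rw [mem_PhiMinus_iff]
      have : rho (w * cs.simple i)⁻¹ (rho w (sroot i)) = -sroot i := by
        rw [mul_inv_rev, cs.inv_simple, rho_mul, rho_inv_apply, rho_simple_self hrho]
      rw [this, neg_neg]
      exact sroot_mem_PhiPlus i
    · obtain ⟨hu1, hu2⟩ := hu
      refine ⟨hu1, ?_⟩
      have hz : rho (w * cs.simple i)⁻¹ u = rho (cs.simple i) (rho w⁻¹ u) := by
        rw [mul_inv_rev, cs.inv_simple, rho_mul]
      rw [hz, mem_PhiMinus_iff, ← map_neg]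
      by_cases hne : -(rho w⁻¹ u) = sroot i
      · exfalso
        -- then u = -w α_i, impossible since both u and w α_i are positive
        have h1 : rho w (-(rho w⁻¹ u)) = rho w (sroot i) := by rw [hne]
        rw [map_neg, ← rho_mul, mul_inv_cancel, rho_one] at h1
        exact not_mem_PhiMinus hu1 (by rw [mem_PhiMinus_iff, h1]; exact hβ)
      · exact simple_perm hsmall hrho i hu2 hne

lemma rho_sroot_not_mem_invSet (hsmall : SmallType M) (hrho : IsGeomRep M cs rho) {w : W}
    {i : S} : rho w (sroot i) ∉ invSet rho w := by
  rintro ⟨h1, h2⟩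
  rw [rho_inv_apply, mem_PhiMinus_iff] at h2
  have := h2.2 i
  simp [sroot, Pi.single_apply] at this
  linarith

end Lemmas4
section Lemmas5
set_option linter.unusedSectionVars false

variable {S : Type} [DecidableEq S] [Fintype S] {W : Type} [Group W]
variable {M : CoxeterMatrix S} {cs : CoxeterSystem M W}
variable {rho : W →* ((S → ℝ) →ₗ[ℝ] (S → ℝ))}

lemma length_le_ncard (hsmall : SmallType M) (hrho : IsGeomRep M cs rho) :
    ∀ (n : ℕ) (w : W), cs.length w = n → ∀ B : Set (S → ℝ), B.Finite →
      invSet rho w ⊆ B → n ≤ B.ncard := by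
  intro n
  induction n with
  | zero => intro w _ B _ _; exact Nat.zero_le _
  | succ n IH =>
    intro w hw B hBfin hsub
    have hw1 : w ≠ 1 := by
      intro h
      rw [h, cs.length_one] at hw
      omega
    obtain ⟨t, ht⟩ := cs.exists_rightDescent_of_ne_one hw1
    have htlt : cs.length (w * cs.simple t) < cs.length w := ht
    set w' := w * cs.simple t with hw'def
    have hw'w : w = w' * cs.simple t := by
      rw [hw'def, cs.simple_mul_simple_cancel_right]
    have hlw' : cs.length w' + 1 = cs.length w := by
      have h := cs.length_mul_simple w t
      rw [← hw'def] at h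
      omega
    have hd : cs.length w' < cs.length (w' * cs.simple t) := by rw [← hw'w]; omega
    have hInv : invSet rho w = insert (rho w' (sroot t)) (invSet rho w') := by
      rw [hw'w]; exact invSet_mul_simple hsmall hrho hd
    set β := rho w' (sroot t) with hβdef
    have hβB : β ∈ B := hsub (by rw [hInv]; exact Set.mem_insert _ _)
    have hsub' : invSet rho w' ⊆ B \ {β} := by
      intro u hu
      refine ⟨hsub (by rw [hInv]; exact Set.mem_insert_of_mem _ hu), ?_⟩
      intro hu2
      rw [Set.mem_singleton_iff] at hu2
      subst hu2
      exact rho_sroot_not_mem_invSet hsmall hrho hu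
    have hIH := IH w' (by omega) (B \ {β}) hBfin.diff hsub'
    have hcard : (B \ {β}).ncard + 1 = B.ncard := Set.ncard_diff_singleton_add_one hβB hBfin
    omega

lemma invSet_mono (hsmall : SmallType M) (hrho : IsGeomRep M cs rho) :
    ∀ (n : ℕ) (u v : W), cs.length (u⁻¹ * v) = n → wle cs u v →
      invSet rho u ⊆ invSet rho v := by
  intro n
  induction n with
  | zero =>
    intro u v hz _
    have : u⁻¹ * v = 1 := cs.length_eq_zero_iff.mp hz
    have hvu : v = u := by
      have h2 : u * (u⁻¹ * v) = u * 1 := by rw [this]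
      rw [mul_one, ← mul_assoc, mul_inv_cancel, one_mul] at h2
      exact h2
    rw [hvu]
  | succ n IH =>
    intro u v hz hwle
    have hz1 : u⁻¹ * v ≠ 1 := by
      intro h; rw [h, cs.length_one] at hz; omega
    obtain ⟨t, ht⟩ := cs.exists_rightDescent_of_ne_one hz1
    have htlt : cs.length (u⁻¹ * v * cs.simple t) < cs.length (u⁻¹ * v) := ht
    have hlz : cs.length (u⁻¹ * v * cs.simple t) + 1 = cs.length (u⁻¹ * v) := by
      have h := cs.length_mul_simple (u⁻¹ * v) t
      omega
    set v' := v * cs.simple t with hv'def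
    have hv'v : v = v' * cs.simple t := by
      rw [hv'def, cs.simple_mul_simple_cancel_right]
    have huv' : u⁻¹ * v' = (u⁻¹ * v) * cs.simple t := by rw [hv'def, mul_assoc]
    -- length of v'
    have hlv'le : cs.length v' ≤ cs.length u + cs.length (u⁻¹ * v') := by
      have := cs.length_mul_le u (u⁻¹ * v')
      calc cs.length v' = cs.length (u * (u⁻¹ * v')) := by rw [← mul_assoc, mul_inv_cancel, one_mul]
        _ ≤ cs.length u + cs.length (u⁻¹ * v') := cs.length_mul_le _ _
    have hlvle : cs.length v ≤ cs.length v' + 1 := by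
      rw [hv'v]
      have := cs.length_mul_le v' (cs.simple t)
      rw [cs.length_simple] at this
      omega
    rw [huv'] at hlv'le
    have hwle' : wle cs u v' := by
      unfold wle at hwle ⊢
      rw [huv']
      omega
    have hstep := IH u v' (by rw [huv']; omega) hwle'
    have hd : cs.length v' < cs.length (v' * cs.simple t) := by
      rw [← hv'v]
      have h1 : cs.length v' = cs.length u + cs.length (u⁻¹ * v') := hwle'
      rw [huv'] at h1
      unfold wle at hwle
      omega
    have hins : invSet rho v = insert (rho v' (sroot t)) (invSet rho v') := by
      rw [hv'v]; exact invSet_mul_simple hsmall hrho hd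
    rw [hins]
    exact hstep.trans (Set.subset_insert _ _)

end Lemmas5
section Lemmas6
set_option linter.unusedSectionVars false

variable {S : Type} [DecidableEq S] [Fintype S] {W : Type} [Group W]
variable {M : CoxeterMatrix S} {cs : CoxeterSystem M W}
variable {rho : W →* ((S → ℝ) →ₗ[ℝ] (S → ℝ))}

lemma pos_not_nonpos {u : S → ℝ} (hu : u ∈ PhiPlus rho) (h : ∀ j, u j ≤ 0) : False := by
  apply root_ne_zero hu.1
  funext j
  have h1 := hu.2 j
  have h2 := h j
  show u j = 0
  linarith

lemma rho_sroot_mem_invSet (hsmall : SmallType M) (hrho : IsGeomRep M cs rho) {w : W} {i : S}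
    (h : cs.length w < cs.length (w * cs.simple i)) :
    rho w (sroot i) ∈ invSet rho (w * cs.simple i) := by
  rw [invSet_mul_simple hsmall hrho h]
  exact Set.mem_insert _ _

lemma invSet_subset_mul_simple (hsmall : SmallType M) (hrho : IsGeomRep M cs rho) {w : W}
    {i : S} (h : cs.length w < cs.length (w * cs.simple i)) :
    invSet rho w ⊆ invSet rho (w * cs.simple i) := by
  rw [invSet_mul_simple hsmall hrho h]
  exact Set.subset_insert _ _

end Lemmas6
/-- **Proposition 2.8.** -/
theorem stmt6 {S : Type} [DecidableEq S] [Fintype S] {W : Type} [Group W]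
    (M : CoxeterMatrix S) (hsmall : SmallType M) (cs : CoxeterSystem M W)
    (rho : W →* ((S → ℝ) →ₗ[ℝ] (S → ℝ))) (hrho : IsGeomRep M cs rho)
    (A : Set (S → ℝ)) (hA : ClosedSub M rho A) :
    {w : W | invSet rho w ⊆ A}.Finite ∧
    (∀ u v : W, wle cs u v → invSet rho v ⊆ A → invSet rho u ⊆ A) ∧
    (∀ (v : W) (s t : S),
      cs.length (v * cs.simple s) = cs.length v + 1 →
      cs.length (v * cs.simple t) = cs.length v + 1 →
      invSet rho (v * cs.simple s) ⊆ A → invSet rho (v * cs.simple t) ⊆ A →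
      invSet rho (v * altProd (cs.simple s) (cs.simple t) (M s t)) ⊆ A) := by
  obtain ⟨hAsub, hAfin, hAbd, hAcl⟩ := hA
  refine ⟨?_, ?_, ?_⟩
  · -- (i) finiteness
    have hsub : {w : W | invSet rho w ⊆ A}
        ⊆ (fun ω : List S => cs.wordProd ω) '' {ω : List S | ω.length ≤ A.ncard} := by
      intro w hw
      obtain ⟨ω, hlen, hprod⟩ := cs.exists_reduced_word w
      have hbd : cs.length w ≤ A.ncard :=
        length_le_ncard hsmall hrho (cs.length w) w rfl A hAfin hw
      exact ⟨ω, by rw [Set.mem_setOf_eq, ← (hlen : cs.length (cs.wordProd ω) = ω.length), ← hprod]; exact hbd, hprod.symm⟩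
    exact (Set.Finite.image _ (List.finite_length_le S A.ncard)).subset hsub
  · -- (ii) monotonicity
    intro u v hwle hsubv
    exact (invSet_mono hsmall hrho (cs.length (u⁻¹ * v)) u v rfl hwle).trans hsubv
  · -- (iii)
    intro v s t hs ht hsubs hsubt
    have hds : cs.length v < cs.length (v * cs.simple s) := by omega
    have hdt : cs.length v < cs.length (v * cs.simple t) := by omega
    have hβs : rho v (sroot s) ∈ A := hsubs (rho_sroot_mem_invSet hsmall hrho hds)
    have hβt : rho v (sroot t) ∈ A := hsubt (rho_sroot_mem_invSet hsmall hrho hdt)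
    have hvsub : invSet rho v ⊆ A :=
      (invSet_subset_mul_simple hsmall hrho hds).trans hsubs
    by_cases hst : s = t
    · subst hst
      rw [M.diagonal s]
      have h1 : altProd (cs.simple s) (cs.simple s) 1 = cs.simple s := by
        simp [altProd]
      rw [h1]
      exact hsubs
    rcases hsmall s t hst with hM2 | hM3
    · -- m = 2
      rw [hM2]
      have hprod : v * altProd (cs.simple s) (cs.simple t) 2
          = v * cs.simple s * cs.simple t := by
        simp [altProd]
        group
      rw [hprod]
      have hcalc : rho (v * cs.simple s) (sroot t) = rho v (sroot t) := by
        rw [rho_mul, rho_simple_sroot hrho, formEnt_two hM2, zero_smul, sub_zero]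
      have hd2 : cs.length (v * cs.simple s)
          < cs.length (v * cs.simple s * cs.simple t) := by
        rcases cs.length_mul_simple (v * cs.simple s) t with h | h
        · omega
        · exfalso
          refine pos_not_nonpos (rho_sroot_mem_PhiPlus hsmall hrho hdt) (fun j => ?_)
          rw [← hcalc]
          exact klneg hsmall hrho _ t (by omega) j
      rw [invSet_mul_simple hsmall hrho hd2, hcalc]
      intro u hu
      rcases hu with rfl | hu
      · exact hβt
      · exact hsubs hu
    · -- m = 3
      rw [hM3]
      have hMts : M t s = 3 := by rw [M.symmetric]; exact hM3
      have hprod : v * altProd (cs.simple s) (cs.simple t) 3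
          = v * cs.simple s * cs.simple t * cs.simple s := by
        simp [altProd]
        group
      rw [hprod]
      have hcalc2 : rho (v * cs.simple s) (sroot t)
          = rho v (sroot t) + rho v (sroot s) := by
        rw [rho_mul, rho_simple_sroot hrho, formEnt_three hM3, neg_smul, one_smul,
          sub_neg_eq_add, map_add]
      have h2pos : rho (v * cs.simple s) (sroot t) ∈ PhiPlus rho := by
        refine ⟨⟨v * cs.simple s, t, rfl⟩, fun j => ?_⟩
        rw [hcalc2]
        have h1 := kl hsmall hrho (cs.length v) v t le_rfl hdt j
        have h2 := kl hsmall hrho (cs.length v) v s le_rfl hds j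
        simp only [Pi.add_apply]
        linarith
      have hd2 : cs.length (v * cs.simple s)
          < cs.length (v * cs.simple s * cs.simple t) := by
        rcases cs.length_mul_simple (v * cs.simple s) t with h | h
        · omega
        · exact absurd (fun j => klneg hsmall hrho (v * cs.simple s) t (by omega) j) 
            (fun hh : ∀ j, rho (v * cs.simple s) (sroot t) j ≤ 0 => pos_not_nonpos h2pos hh)
      have hsum : rho (cs.simple s) (sroot s + sroot t) = sroot t := by
        rw [hrho, form_add_right, form_sroot_sroot, form_sroot_sroot, formEnt_self,
          formEnt_three hM3]
        have h21 : (2:ℝ) + -1 = 1 := by norm_num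
        rw [h21, one_smul]
        abel
      have hcalc3 : rho (v * cs.simple s * cs.simple t) (sroot s) = rho v (sroot t) := by
        calc rho (v * cs.simple s * cs.simple t) (sroot s)
            = rho (v * cs.simple s) (rho (cs.simple t) (sroot s)) := by rw [rho_mul]
          _ = rho (v * cs.simple s) (sroot s + sroot t) := by
              rw [rho_simple_sroot hrho, formEnt_three hMts, neg_smul, one_smul,
                sub_neg_eq_add]
          _ = rho v (rho (cs.simple s) (sroot s + sroot t)) := by rw [← rho_mul]
          _ = rho v (sroot t) := by rw [hsum]
      have hd3 : cs.length (v * cs.simple s * cs.simple t)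
          < cs.length (v * cs.simple s * cs.simple t * cs.simple s) := by
        rcases cs.length_mul_simple (v * cs.simple s * cs.simple t) s with h | h
        · omega
        · exfalso
          have hpos : rho (v * cs.simple s * cs.simple t) (sroot s) ∈ PhiPlus rho := by
            refine ⟨⟨v * cs.simple s * cs.simple t, s, rfl⟩, fun j => ?_⟩
            rw [hcalc3]
            exact kl hsmall hrho (cs.length v) v t le_rfl hdt j
          exact pos_not_nonpos hpos
            (fun j => klneg hsmall hrho (v * cs.simple s * cs.simple t) s (by omega) j)
      rw [invSet_mul_simple hsmall hrho hd3, hcalc3, invSet_mul_simple hsmall hrho hd2,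
        hcalc2, invSet_mul_simple hsmall hrho hds]
      intro u hu
      rcases hu with rfl | hu
      · exact hβt
      rcases hu with rfl | hu
      · have hform : form M (rho v (sroot t)) (rho v (sroot s)) = -1 := by
          rw [form_rho hrho, form_sroot_sroot, formEnt_three hMts]
        exact hAcl _ hβt _ hβs hform
      rcases hu with rfl | hu
      · exact hβs
      · exact hvsub hu

end ArtinInj
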